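/- Let p be a prime with p ≡ 3 (mod 4) and let K = ℚ(√p). If ε ∈ 𝒪_K is a unit which is a norm from ℚ(p^{1/4}) — concretely, if there exist α, β ∈ ℤ[√p] with α² − √p·β² = ε — then ε ≡ 1 (mod √p), i.e., writing ε = x + y√p with x, y ∈ ℤ one has x ≡ 1 (mod p). -/

import Mathlib

theorem unit_norm_cong_one (p : ℕ) (hp : p.Prime) (h4 : p % 4 = 3)
    (ε α β : Zsqrtd (p : ℤ)) (hunit : IsUnit ε)
    (hnorm : α ^ 2 - Zsqrtd.sqrtd * β ^ 2 = ε) :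
    ε.re ≡ 1 [ZMOD (p : ℤ)] := by
  haveI : Fact p.Prime := ⟨hp⟩
  have hre := congrArg Zsqrtd.re hnorm
  simp only [pow_two, Zsqrtd.re_sub, Zsqrtd.re_mul, Zsqrtd.im_mul,
    Zsqrtd.re_sqrtd, Zsqrtd.im_sqrtd] at hre
  -- ε.re ≡ α.re ^ 2 mod p
  have hx : ((ε.re : ZMod p)) = (α.re : ZMod p) ^ 2 := by
    rw [← hre]
    push_cast
    simp [ZMod.natCast_self]
    ring
  have hnsq : ¬ IsSquare (-1 : ZMod p) := by
    rw [ZMod.exists_sq_eq_neg_one_iff]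
    simp [h4]
  -- norm of unit
  have hn := Zsqrtd.norm_eq_one_iff.mpr hunit
  have hn' : ε.norm = 1 ∨ ε.norm = -1 := Int.natAbs_eq_iff.mp hn |>.imp id id
  have hcast : ((ε.norm : ZMod p)) = (ε.re : ZMod p) ^ 2 := by
    rw [Zsqrtd.norm_def]
    push_cast
    simp [ZMod.natCast_self]
    ring
  have hsq : (ε.re : ZMod p) ^ 2 = 1 := by
    rcases hn' with h | h
    · rw [← hcast, h]; norm_num
    · exfalso
      apply hnsq
      refine ⟨(α.re : ZMod p) ^ 2, ?_⟩
      rw [h] at hcast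
      push_cast at hcast
      rw [← sq, ← hx, ← hcast]
  have h1 : (ε.re : ZMod p) = 1 := by
    rcases sq_eq_one_iff.mp hsq with h | h
    · exact h
    · exfalso
      apply hnsq
      exact ⟨(α.re : ZMod p), by rw [← sq, ← hx, h]⟩
  have := (ZMod.intCast_eq_intCast_iff (ε.re) 1 p).mp (by rw [h1]; norm_num)
  simpa using this
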